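/- Let {X_t} be a sequence of nonnegative real numbers and {α_t} a decreasing sequence of positive real numbers such that ∑_{t=1}^∞ α_t X_t < ∞ and ∑_{t=1}^∞ α_t / (∑_{i=1}^{t-1} α_i) = ∞. Then min_{1 ≤ i ≤ t} X_i = o(1 / ∑_{i=1}^{t-1} α_i), i.e., (∑_{i=1}^{t-1} α_i) · min_{1 ≤ i ≤ t} X_i → 0 as t → ∞. -/

import Mathlib

open Filter

/-- Lemma 2 of Liu–Yuan: if `X` is nonnegative, `α` is positive and
decreasing, `∑ α_t X_t < ∞` and `∑ α_t / (∑_{i<t} α_i) = ∞`, then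
`min_{i ≤ t} X_i = o(1 / ∑_{i<t} α_i)`. -/
theorem min_little_o_of_summable (X α : ℕ → ℝ)
    (hX : ∀ t, 0 ≤ X t) (hα : ∀ t, 0 < α t) (hmono : Antitone α)
    (hsum : Summable fun t => α t * X t)
    (hdiv : ¬ Summable fun t => α (t + 1) / ∑ i ∈ Finset.range (t + 1), α i) :
    Tendsto
      (fun t => (∑ i ∈ Finset.range t, α i) *
        (Finset.range (t + 1)).inf' Finset.nonempty_range_add_one X)
      atTop (nhds 0) := by
  set S : ℕ → ℝ := fun t => ∑ i ∈ Finset.range t, α i with hSdef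
  set m : ℕ → ℝ := fun t => (Finset.range (t+1)).inf' Finset.nonempty_range_add_one X with hmdef
  have hm0 : ∀ t, 0 ≤ m t := fun t => Finset.le_inf' _ _ (fun i _ => hX i)
  have hSpos : ∀ t, α 0 ≤ S (t + 1) := by
    intro t
    exact Finset.single_le_sum (f := α) (fun i _ => (hα i).le)
      (Finset.mem_range.2 (Nat.succ_pos t))
  -- α is not summable
  have hαns : ¬ Summable α := by
    intro h
    apply hdiv
    have h1 : Summable fun t => α (t+1) := (summable_nat_add_iff 1).2 h
    refine Summable.of_nonneg_of_le (fun t => div_nonneg (hα _).le ?_)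
      (fun t => ?_) (h1.div_const (α 0))
    · exact Finset.sum_nonneg fun i _ => (hα i).le
    · exact div_le_div_of_nonneg_left (hα _).le (hα 0) (hSpos t)
  have hStop : Tendsto S atTop atTop := by
    have := (not_summable_iff_tendsto_nat_atTop_of_nonneg (fun i => (hα i).le)).1 hαns
    exact this
  have hSmono : Monotone S := by
    intro a b hab
    exact Finset.sum_le_sum_of_subset_of_nonneg (Finset.range_subset_range.2 hab)
      (fun i _ _ => (hα i).le)
  set L : ℝ := ∑' t, α t * X t with hL
  set P : ℕ → ℝ := fun n => ∑ i ∈ Finset.range n, α i * X i with hPdef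
  have hPtend : Tendsto P atTop (nhds L) := hsum.hasSum.tendsto_sum_nat
  have hPle : ∀ n, P n ≤ L :=
    fun n => Summable.sum_le_tsum _ (fun i _ => mul_nonneg (hα i).le (hX i)) hsum
  -- key inequality
  have key : ∀ N T : ℕ, N ≤ T → m T * (S (T+1) - S N) ≤ P (T+1) - P N := by
    intro N T hNT
    have hN' : N ≤ T + 1 := hNT.trans (Nat.le_succ T)
    have h1 : S (T+1) - S N = ∑ i ∈ Finset.Ico N (T+1), α i := by
      rw [hSdef]; rw [Finset.sum_Ico_eq_sub _ hN']
    have h2 : P (T+1) - P N = ∑ i ∈ Finset.Ico N (T+1), α i * X i := by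
      rw [hPdef]; rw [Finset.sum_Ico_eq_sub _ hN']
    rw [h1, h2, Finset.mul_sum]
    refine Finset.sum_le_sum fun i hi => ?_
    have hiT : i ∈ Finset.range (T+1) := by
      rw [Finset.mem_range]; exact (Finset.mem_Ico.1 hi).2
    have hmX : m T ≤ X i := Finset.inf'_le _ hiT
    calc m T * α i ≤ X i * α i := mul_le_mul_of_nonneg_right hmX (hα i).le
      _ = α i * X i := mul_comm _ _
  rw [Metric.tendsto_atTop]
  intro ε hε
  -- choose N with L - P N < ε / 4
  obtain ⟨N, hN⟩ := Metric.tendsto_atTop.1 hPtend (ε/4) (by positivity)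
  have htail : L - P N < ε / 4 := by
    have := abs_lt.1 ((Real.dist_eq _ _) ▸ hN N le_rfl)
    linarith [this.1]
  -- eventually S (T+1) ≥ 2 * S N and T ≥ N
  have hST : ∀ᶠ T in atTop, 2 * S N ≤ S (T + 1) :=
    (hStop.comp (tendsto_add_atTop_nat 1)).eventually_ge_atTop (2 * S N)
  obtain ⟨M, hM⟩ := (hST.and (eventually_ge_atTop N)).exists_forall_of_atTop
  refine ⟨M, fun T hT => ?_⟩
  obtain ⟨h2S, hNT⟩ := hM T hT
  have hkey := key N T hNT
  have hS1 : S T ≤ S (T+1) := hSmono (Nat.le_succ T)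
  have hdiff : S (T+1) ≤ 2 * (S (T+1) - S N) := by linarith
  have hPd : P (T+1) - P N ≤ L - P N := by
    have := hPle (T+1); linarith
  have hmain : S T * m T ≤ 2 * (L - P N) := by
    have h1 : S T * m T ≤ S (T+1) * m T :=
      mul_le_mul_of_nonneg_right hS1 (hm0 T)
    have h2 : S (T+1) * m T ≤ 2 * (S (T+1) - S N) * m T :=
      mul_le_mul_of_nonneg_right hdiff (hm0 T)
    have h3 : 2 * (S (T+1) - S N) * m T = 2 * (m T * (S (T+1) - S N)) := by ring
    nlinarith [hm0 T]
  have hnn : 0 ≤ S T * m T := by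
    have : 0 ≤ S T := Finset.sum_nonneg fun i _ => (hα i).le
    exact mul_nonneg this (hm0 T)
  rw [Real.dist_eq, sub_zero, abs_of_nonneg hnn]
  linarith
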